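/- Let G_n(x_1,...,x_n | R) = ∑_{p=0}^{n} (-1)^p 2^{n-p} B_{n-p,n}, where B_{q,n} = ∑_{1≤k_1<...<k_q≤n} Φ_q(x_{k_1},...,x_{k_q} | R_{k_1...k_q}) for q ≥ 1 (Φ_q the Gaussian CDF with the corresponding submatrix of the correlation matrix R) and B_{0,n} = 1. Then lim_{x_n→+∞} G_n(x_1,...,x_n|R) = G_{n-1}(x_1,...,x_{n-1}|R') and lim_{x_n→-∞} G_n(x_1,...,x_n|R) = -G_{n-1}(x_1,...,x_{n-1}|R'), where R' is R with the last row and column removed. -/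

import Mathlib

open MeasureTheory Matrix Finset Filter

/-- CDF of a centered `q`-variate Gaussian with unit variances and correlation matrix `R`. -/
noncomputable def gaussCDF {q : ℕ} (R : Matrix (Fin q) (Fin q) ℝ) (x : Fin q → ℝ) : ℝ :=
  ∫ u in Set.pi Set.univ (fun i => Set.Iic (x i)),
    (2 * Real.pi) ^ (-(q : ℝ) / 2) * R.det ^ (-(1 : ℝ) / 2) *
      Real.exp (-(dotProduct u (R⁻¹.mulVec u)) / 2)

/-- The block function `B_{p,n}`: sum of marginal Gaussian CDFs over all ordered
`p`-tuples of indices; `B_{0,n} = 1`. -/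
noncomputable def blockFun (n p : ℕ) (R : Matrix (Fin n) (Fin n) ℝ) (x : Fin n → ℝ) : ℝ :=
  if p = 0 then 1
  else ∑ s ∈ Finset.powersetCard p (Finset.univ : Finset (Fin n)),
    if h : s.card = p then
      gaussCDF (R.submatrix (s.orderEmbOfFin h) (s.orderEmbOfFin h))
        (fun i => x (s.orderEmbOfFin h i))
    else 0

/-- The `n`-body cluster function. -/
noncomputable def clusterFun (n : ℕ) (R : Matrix (Fin n) (Fin n) ℝ) (x : Fin n → ℝ) : ℝ :=
  ∑ p ∈ Finset.range (n + 1), (-1 : ℝ) ^ p * 2 ^ (n - p) * blockFun n (n - p) R x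


section OneD

lemma integral_exp_quadratic (a b g : ℝ) (ha : 0 < a) :
    ∫ t : ℝ, Real.exp (-(a * t ^ 2 + 2 * b * t + g) / 2)
      = Real.sqrt (2 * Real.pi / a) * Real.exp (-(g - b ^ 2 / a) / 2) := by
  have key : ∀ t : ℝ, -(a * t ^ 2 + 2 * b * t + g) / 2
      = -(a / 2) * (t + b / a) ^ 2 + -(g - b ^ 2 / a) / 2 := by
    intro t; field_simp; ring
  calc ∫ t : ℝ, Real.exp (-(a * t ^ 2 + 2 * b * t + g) / 2)
      = ∫ t : ℝ, Real.exp (-(a / 2) * (t + b / a) ^ 2) * Real.exp (-(g - b ^ 2 / a) / 2) := by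
        congr 1; funext t; rw [← Real.exp_add, ← key]
    _ = (∫ t : ℝ, Real.exp (-(a / 2) * (t + b / a) ^ 2)) * Real.exp (-(g - b ^ 2 / a) / 2) :=
        integral_mul_const _ _
    _ = _ := by
        rw [integral_add_right_eq_self (fun s => Real.exp (-(a / 2) * s ^ 2)) (b / a),
          integral_gaussian]
        congr 2
        rw [div_div_eq_mul_div]; ring

end OneD

section Integrability

variable {q : ℕ}

lemma continuous_quadForm (A : Matrix (Fin q) (Fin q) ℝ) :
    Continuous fun u : Fin q → ℝ => u ⬝ᵥ A *ᵥ u := by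
  have : (fun u : Fin q → ℝ => u ⬝ᵥ A *ᵥ u)
      = fun u => ∑ i, ∑ j, u i * (A i j * u j) := by
    funext u; simp [dotProduct, Matrix.mulVec, Finset.mul_sum]
  rw [this]
  exact continuous_finset_sum _ fun i _ => continuous_finset_sum _ fun j _ =>
    ((continuous_apply i).mul (continuous_const.mul (continuous_apply j)))

lemma quadForm_smul (A : Matrix (Fin q) (Fin q) ℝ) (c : ℝ) (u : Fin q → ℝ) :
    (c • u) ⬝ᵥ A *ᵥ (c • u) = c ^ 2 * (u ⬝ᵥ A *ᵥ u) := by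
  rw [smul_dotProduct, Matrix.mulVec_smul, dotProduct_smul]
  simp [smul_smul, sq, mul_assoc]

lemma posDef_quad_lower_bound {A : Matrix (Fin (q + 1)) (Fin (q + 1)) ℝ} (hA : A.PosDef) :
    ∃ ε > 0, ∀ u : Fin (q + 1) → ℝ, ε * ∑ i, u i ^ 2 ≤ u ⬝ᵥ A *ᵥ u := by
  set N : (Fin (q + 1) → ℝ) → ℝ := fun u => ∑ i, u i ^ 2 with hN
  have hNcont : Continuous N := continuous_finset_sum _ fun i _ => (continuous_apply i).pow 2
  set C : Set (Fin (q + 1) → ℝ) := {u | N u = 1} with hC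
  have hCclosed : IsClosed C := isClosed_eq hNcont continuous_const
  have hCbdd : Bornology.IsBounded C := by
    apply (Metric.isBounded_iff_subset_closedBall 0).2
    refine ⟨1, fun u hu => ?_⟩
    simp only [Metric.mem_closedBall, dist_zero_right]
    have h1 : ∀ i, u i ^ 2 ≤ 1 := by
      intro i
      calc u i ^ 2 ≤ N u := Finset.single_le_sum (f := fun i => u i ^ 2)
            (fun i _ => sq_nonneg _) (Finset.mem_univ i)
        _ = 1 := hu
    rw [pi_norm_le_iff_of_nonneg (by norm_num)]
    intro i
    have := h1 i
    rw [Real.norm_eq_abs]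
    nlinarith [abs_nonneg (u i), sq_abs (u i)]
  have hCcompact : IsCompact C := Metric.isCompact_of_isClosed_isBounded hCclosed hCbdd
  have hCne : C.Nonempty := by
    refine ⟨Pi.single 0 1, ?_⟩
    simp only [hC, Set.mem_setOf_eq, hN]
    rw [Finset.sum_eq_single 0]
    · simp
    · intro i _ hi; simp [Pi.single_apply, hi]
    · simp
  obtain ⟨u₀, hu₀C, hmin⟩ := hCcompact.exists_isMinOn hCne
    ((continuous_quadForm A).continuousOn)
  have hu₀ne : u₀ ≠ 0 := by
    intro h
    rw [hC, Set.mem_setOf_eq, h] at hu₀C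
    simp [hN] at hu₀C
  refine ⟨u₀ ⬝ᵥ A *ᵥ u₀, (by have h := hA.dotProduct_mulVec_pos (x := u₀) (by simpa using hu₀ne); rwa [star_trivial] at h), fun u => ?_⟩
  rcases eq_or_ne u 0 with rfl | hu
  · simp [hN]
  · have hNu : 0 < N u := by
      have : ∃ i, u i ≠ 0 := by
        by_contra h
        push_neg at h
        exact hu (funext h)
      obtain ⟨i, hi⟩ := this
      have : 0 < u i ^ 2 := by positivity
      calc (0:ℝ) < u i ^ 2 := this
        _ ≤ N u := Finset.single_le_sum (f := fun i => u i ^ 2)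
            (fun i _ => sq_nonneg _) (Finset.mem_univ i)
    set r := Real.sqrt (N u) with hr
    have hrpos : 0 < r := Real.sqrt_pos.2 hNu
    have hr2 : r ^ 2 = N u := Real.sq_sqrt hNu.le
    set w := r⁻¹ • u with hw
    have hwC : w ∈ C := by
      simp only [hC, Set.mem_setOf_eq, hN, hw]
      have : ∀ i, (r⁻¹ • u) i ^ 2 = r⁻¹ ^ 2 * u i ^ 2 := by
        intro i; simp [Pi.smul_apply, mul_pow]
      rw [Finset.sum_congr rfl fun i _ => this i, ← Finset.mul_sum]
      show r⁻¹ ^ 2 * N u = 1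
      rw [← hr2]
      field_simp
    have hQw : w ⬝ᵥ A *ᵥ w = r⁻¹ ^ 2 * (u ⬝ᵥ A *ᵥ u) := quadForm_smul A r⁻¹ u
    have := hmin hwC
    -- this : Q u₀ ≤ Q w
    simp only [Set.mem_setOf_eq] at this
    have h2 : (u₀ ⬝ᵥ A *ᵥ u₀) * N u ≤ (u ⬝ᵥ A *ᵥ u) := by
      have := this
      rw [hQw] at this
      have h3 : (u₀ ⬝ᵥ A *ᵥ u₀) ≤ (u ⬝ᵥ A *ᵥ u) / N u := by
        rw [← hr2]
        field_simp at this ⊢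
        linarith [this]
      calc (u₀ ⬝ᵥ A *ᵥ u₀) * N u ≤ ((u ⬝ᵥ A *ᵥ u) / N u) * N u := by
            apply mul_le_mul_of_nonneg_right h3 hNu.le
        _ = u ⬝ᵥ A *ᵥ u := by field_simp
    linarith [h2]

lemma integrable_gaussExp {A : Matrix (Fin (q + 1)) (Fin (q + 1)) ℝ} (hA : A.PosDef) :
    Integrable (fun u : Fin (q + 1) → ℝ => Real.exp (-(u ⬝ᵥ A *ᵥ u) / 2)) := by
  obtain ⟨ε, hε, hbound⟩ := posDef_quad_lower_bound hA
  have hcont : Continuous fun u : Fin (q + 1) → ℝ => Real.exp (-(u ⬝ᵥ A *ᵥ u) / 2) :=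
    (Real.continuous_exp.comp ((continuous_quadForm A).neg.div_const 2))
  have hdom : Integrable (fun u : Fin (q + 1) → ℝ =>
      ∏ i, Real.exp (-(ε / 2) * (u i) ^ 2)) :=
    Integrable.fintype_prod (f := fun _ x => Real.exp (-(ε / 2) * x ^ 2))
      (fun i => integrable_exp_neg_mul_sq (by positivity))
  refine Integrable.mono hdom hcont.aestronglyMeasurable ?_
  filter_upwards with u
  rw [Real.norm_eq_abs, Real.norm_eq_abs, abs_of_pos (Real.exp_pos _),
    abs_of_pos (by positivity)]
  rw [← Real.exp_sum]
  apply Real.exp_le_exp.2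
  have := hbound u
  rw [← Finset.mul_sum]
  linarith

end Integrability


section LinAlg

variable {m : ℕ}

/-- Positive definiteness is preserved under taking submatrices along injective maps. -/
lemma posDef_submatrix_of_injective {N : Type*} [Fintype N] [DecidableEq N]
    {M : Matrix N N ℝ} (hM : M.PosDef) {k : ℕ} (e : Fin k → N) (he : Function.Injective e) :
    (M.submatrix e e).PosDef := by
  refine Matrix.PosDef.of_dotProduct_mulVec_pos (hM.1.submatrix e) fun x hx => ?_
  classical
  set y : N → ℝ := fun j => ∑ i, if e i = j then x i else 0 with hy
  have hsum : ∀ g : N → ℝ, ∑ j, y j * g j = ∑ i, x i * g (e i) := by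
    intro g
    simp only [hy, Finset.sum_mul]
    rw [Finset.sum_comm]
    refine Finset.sum_congr rfl fun i _ => ?_
    rw [Finset.sum_congr rfl (fun j _ => by rw [ite_mul, zero_mul] :
      ∀ j ∈ Finset.univ, (if e i = j then x i else 0) * g j
        = if e i = j then x i * g j else 0)]
    rw [Finset.sum_ite_eq Finset.univ (e i) (fun j => x i * g j)]
    simp
  have hye : ∀ i, y (e i) = x i := by
    intro i
    simp only [hy]
    rw [Finset.sum_eq_single i]
    · simp
    · intro i' _ hi'; rw [if_neg (fun h => hi' (he h))]
    · simp
  have hyne : y ≠ 0 := by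
    intro h
    apply hx
    funext i
    have := congrFun h (e i)
    rw [hye i] at this
    exact this
  have hkey : y ⬝ᵥ M *ᵥ y = x ⬝ᵥ (M.submatrix e e) *ᵥ x := by
    show ∑ j, y j * (M *ᵥ y) j = ∑ i, x i * ((M.submatrix e e) *ᵥ x) i
    rw [hsum fun j => (M *ᵥ y) j]
    refine Finset.sum_congr rfl fun i _ => ?_
    congr 1
    show ∑ k, M (e i) k * y k = ∑ i', M (e i) (e i') * x i'
    calc ∑ k, M (e i) k * y k = ∑ k, y k * M (e i) k := by
          refine Finset.sum_congr rfl fun k _ => mul_comm _ _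
      _ = ∑ i', x i' * M (e i) (e i') := hsum fun k => M (e i) k
      _ = ∑ i', M (e i) (e i') * x i' := Finset.sum_congr rfl fun i' _ => mul_comm _ _
  have := hM.dotProduct_mulVec_pos hyne
  simp only [star_trivial] at this ⊢
  rw [hkey] at this
  exact this

/-- Schur complement is a left inverse of the principal submatrix. -/
lemma schur_left_inv {A S : Matrix (Fin (m + 1)) (Fin (m + 1)) ℝ} (hAS : A * S = 1)
    (hα : A (Fin.last m) (Fin.last m) ≠ 0) :
    (Matrix.of fun i j : Fin m => A i.castSucc j.castSucc -
        A i.castSucc (Fin.last m) * A (Fin.last m) j.castSucc / A (Fin.last m) (Fin.last m)) *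
      S.submatrix Fin.castSucc Fin.castSucc = 1 := by
  ext i j
  have h1 := congrFun (congrFun hAS i.castSucc) j.castSucc
  have h2 := congrFun (congrFun hAS (Fin.last m)) j.castSucc
  rw [Matrix.mul_apply, Matrix.one_apply] at h1 h2
  rw [Fin.sum_univ_castSucc] at h1 h2
  rw [if_neg (show ¬ Fin.last m = j.castSucc from
    fun h => (Fin.castSucc_lt_last j).ne' h)] at h2
  rw [Matrix.mul_apply, Matrix.one_apply]
  simp only [Fin.castSucc_inj] at h1
  have expand : ∑ k : Fin m, (Matrix.of fun i j : Fin m => A i.castSucc j.castSucc -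
        A i.castSucc (Fin.last m) * A (Fin.last m) j.castSucc /
          A (Fin.last m) (Fin.last m)) i k *
        (S.submatrix Fin.castSucc Fin.castSucc) k j
      = (∑ k : Fin m, A i.castSucc k.castSucc * S k.castSucc j.castSucc)
        - (A i.castSucc (Fin.last m) / A (Fin.last m) (Fin.last m)) *
            ∑ k : Fin m, A (Fin.last m) k.castSucc * S k.castSucc j.castSucc := by
    rw [Finset.mul_sum, ← Finset.sum_sub_distrib]
    refine Finset.sum_congr rfl fun k _ => ?_
    simp only [Matrix.of_apply, Matrix.submatrix_apply]
    ring
  rw [expand]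
  have e2 : ∑ k : Fin m, A (Fin.last m) k.castSucc * S k.castSucc j.castSucc
      = -(A (Fin.last m) (Fin.last m) * S (Fin.last m) j.castSucc) := by
    linarith [h2]
  rw [e2]
  have hsimp : A i.castSucc (Fin.last m) / A (Fin.last m) (Fin.last m) *
      -(A (Fin.last m) (Fin.last m) * S (Fin.last m) j.castSucc)
      = -(A i.castSucc (Fin.last m) * S (Fin.last m) j.castSucc) := by
    field_simp
  rw [hsimp]
  by_cases h : i = j
  · rw [if_pos h]; rw [if_pos h] at h1; linarith
  · rw [if_neg h]; rw [if_neg h] at h1; linarith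

/-- Schur determinant identity for the last row/column. -/
lemma schur_det {A : Matrix (Fin (m + 1)) (Fin (m + 1)) ℝ}
    (hα : A (Fin.last m) (Fin.last m) ≠ 0) :
    A.det = A (Fin.last m) (Fin.last m) *
      (Matrix.of fun i j : Fin m => A i.castSucc j.castSucc -
        A i.castSucc (Fin.last m) * A (Fin.last m) j.castSucc /
          A (Fin.last m) (Fin.last m)).det := by
  classical
  set L := Fin.last m
  set α := A L L with hαdef
  set e : Fin m ⊕ Fin 1 ≃ Fin (m + 1) := finSumFinEquiv with he
  have heL : e (Sum.inr 0) = L := by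
    simp only [he, finSumFinEquiv_apply_right]
    ext
    simp [Fin.natAdd, L, Fin.last]
  have heC : ∀ i : Fin m, e (Sum.inl i) = i.castSucc := by
    intro i
    simp only [he, finSumFinEquiv_apply_left]
    ext
    simp [Fin.castAdd, Fin.castSucc]
  set M := A.submatrix e e with hM
  have hdet : M.det = A.det := Matrix.det_submatrix_equiv_self e A
  have hM22 : M.toBlocks₂₂ = α • (1 : Matrix (Fin 1) (Fin 1) ℝ) := by
    ext i j
    fin_cases i; fin_cases j
    simp [Matrix.toBlocks₂₂, hM, heL, Matrix.one_apply]
    exact hαdef.symm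
  have : Invertible M.toBlocks₂₂ := by
    apply Matrix.invertibleOfIsUnitDet
    rw [hM22, Matrix.det_fin_one]
    simp only [Matrix.smul_apply, Matrix.one_apply_eq, smul_eq_mul, mul_one]
    exact hα.isUnit
  have hinv : ⅟ M.toBlocks₂₂ = α⁻¹ • (1 : Matrix (Fin 1) (Fin 1) ℝ) := by
    apply invOf_eq_right_inv
    rw [hM22, Matrix.smul_mul, Matrix.mul_smul, smul_smul, mul_inv_cancel₀ hα, one_smul, Matrix.mul_one]
  have hblocks := Matrix.det_fromBlocks₂₂ M.toBlocks₁₁ M.toBlocks₁₂ M.toBlocks₂₁ M.toBlocks₂₂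
  rw [Matrix.fromBlocks_toBlocks] at hblocks
  rw [← hdet, hblocks]
  have hd22 : M.toBlocks₂₂.det = α := by rw [hM22]; simp [Matrix.det_fin_one]
  rw [hd22, hinv]
  congr 1
  congr 1
  ext i j
  simp only [Matrix.sub_apply, Matrix.toBlocks₁₁, Matrix.of_apply, Matrix.mul_apply,
    Fin.sum_univ_one, Matrix.smul_apply, Matrix.one_apply, Matrix.toBlocks₁₂, Matrix.toBlocks₂₁,
    hM, Matrix.submatrix_apply, heC, heL, if_true, smul_eq_mul, mul_one]
  rw [div_eq_mul_inv]
  ring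

end LinAlg

section QuadForms


variable {m : ℕ}

lemma quad_snoc (A : Matrix (Fin (m + 1)) (Fin (m + 1)) ℝ) (hsymA : A.IsSymm)
    (v : Fin m → ℝ) (t : ℝ) :
    (Fin.snoc v t : Fin (m + 1) → ℝ) ⬝ᵥ A *ᵥ (Fin.snoc v t : Fin (m + 1) → ℝ)
      = A (Fin.last m) (Fin.last m) * t ^ 2
        + 2 * (∑ i, A (Fin.last m) i.castSucc * v i) * t
        + v ⬝ᵥ (A.submatrix Fin.castSucc Fin.castSucc) *ᵥ v := by
  simp only [dotProduct, Matrix.mulVec, Matrix.submatrix_apply]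
  rw [Fin.sum_univ_castSucc]
  simp only [Fin.snoc_castSucc, Fin.snoc_last]
  have inner : ∀ j : Fin (m + 1), (∑ k, A j k * (Fin.snoc v t : Fin (m + 1) → ℝ) k)
      = ∑ k : Fin m, A j k.castSucc * v k + A j (Fin.last m) * t := by
    intro j
    rw [Fin.sum_univ_castSucc]
    simp only [Fin.snoc_castSucc, Fin.snoc_last]
  rw [Finset.sum_congr rfl fun i _ => by rw [inner i.castSucc]]
  rw [inner (Fin.last m)]
  have expand : ∑ i : Fin m, v i * (∑ k : Fin m, A i.castSucc k.castSucc * v k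
        + A i.castSucc (Fin.last m) * t)
      = (∑ i : Fin m, v i * ∑ k : Fin m, A i.castSucc k.castSucc * v k)
        + (∑ i : Fin m, A (Fin.last m) i.castSucc * v i) * t := by
    rw [Finset.sum_congr rfl fun i (_ : i ∈ Finset.univ) => mul_add (v i) _ _,
      Finset.sum_add_distrib, Finset.sum_mul]
    congr 1
    refine Finset.sum_congr rfl fun i _ => ?_
    rw [hsymA.apply (Fin.last m) i.castSucc]
    ring
  rw [expand]
  ring

lemma quad_schur (A : Matrix (Fin (m + 1)) (Fin (m + 1)) ℝ) (hsymA : A.IsSymm)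
    (hα : A (Fin.last m) (Fin.last m) ≠ 0) (v : Fin m → ℝ) :
    v ⬝ᵥ (Matrix.of fun i j : Fin m => A i.castSucc j.castSucc -
        A i.castSucc (Fin.last m) * A (Fin.last m) j.castSucc /
          A (Fin.last m) (Fin.last m)) *ᵥ v
      = v ⬝ᵥ (A.submatrix Fin.castSucc Fin.castSucc) *ᵥ v
        - (∑ i, A (Fin.last m) i.castSucc * v i) ^ 2 / A (Fin.last m) (Fin.last m) := by
  have hβ : (∑ i, A (Fin.last m) i.castSucc * v i) ^ 2
      = ∑ i : Fin m, ∑ j : Fin m, (A (Fin.last m) i.castSucc * v i) *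
          (A (Fin.last m) j.castSucc * v j) := by
    rw [sq, Finset.sum_mul_sum]
  simp only [dotProduct, Matrix.mulVec, Matrix.of_apply, Matrix.submatrix_apply]
  rw [hβ, Finset.sum_div, ← Finset.sum_sub_distrib]
  refine Finset.sum_congr rfl fun i _ => ?_
  rw [Finset.mul_sum, Finset.mul_sum, Finset.sum_div, ← Finset.sum_sub_distrib]
  refine Finset.sum_congr rfl fun j _ => ?_
  rw [hsymA.apply (Fin.last m) i.castSucc]
  field_simp

end QuadForms
section Main

lemma gauss_limits (m : ℕ) (S : Matrix (Fin (m + 1)) (Fin (m + 1)) ℝ)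
    (hsym : S.IsSymm) (hpd : S.PosDef) (y : Fin (m + 1) → ℝ) :
    Tendsto (fun c => gaussCDF S (Function.update y (Fin.last m) c)) atTop
      (nhds (gaussCDF (S.submatrix Fin.castSucc Fin.castSucc) fun i => y i.castSucc)) ∧
    Tendsto (fun c => gaussCDF S (Function.update y (Fin.last m) c)) atBot (nhds 0) := by
  classical
  set L := Fin.last m with hL
  have hdetS : 0 < S.det := hpd.det_pos
  set A := S⁻¹ with hA
  have hApd : A.PosDef := hpd.inv
  have hAsym : A.IsSymm := by
    show Aᵀ = A
    rw [hA, Matrix.transpose_nonsing_inv, hsym.eq]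
  have hαpos : 0 < A L L := by
    have hne : (Pi.single L 1 : Fin (m+1) → ℝ) ≠ 0 := by
      intro h
      have := congrFun h L
      simp at this
    have := hApd.dotProduct_mulVec_pos hne
    simpa [Matrix.mulVec_single, dotProduct_single] using this
  set S' := S.submatrix (Fin.castSucc : Fin m → Fin (m + 1)) Fin.castSucc with hS'
  have hS'pd : S'.PosDef :=
    posDef_submatrix_of_injective hpd _ (Fin.castSucc_injective m)
  have hdetS' : 0 < S'.det := hS'pd.det_pos
  have hAS : A * S = 1 := Matrix.nonsing_inv_mul S hdetS.ne'.isUnit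
  set Bmat := (Matrix.of fun i j : Fin m => A i.castSucc j.castSucc -
      A i.castSucc L * A L j.castSucc / A L L) with hBmat
  have hBinv : S'⁻¹ = Bmat := Matrix.inv_eq_left_inv (schur_left_inv hAS hαpos.ne')
  have hdet' : S'.det = A L L * S.det := by
    have e1 : A.det = A L L * Bmat.det := schur_det hαpos.ne'
    have e2 : Bmat.det = S'.det⁻¹ := by
      rw [← hBinv, Matrix.det_nonsing_inv, Ring.inverse_eq_inv]
    have e3 : A.det = S.det⁻¹ := by
      rw [hA, Matrix.det_nonsing_inv, Ring.inverse_eq_inv]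
    rw [e2, e3] at e1
    have h6 : S.det⁻¹ * (S.det * S'.det) = A L L * S'.det⁻¹ * (S.det * S'.det) := by
      rw [e1]
    rw [← mul_assoc, inv_mul_cancel₀ hdetS.ne', one_mul] at h6
    rw [h6]
    calc A L L * S'.det⁻¹ * (S.det * S'.det)
        = A L L * S.det * (S'.det⁻¹ * S'.det) := by ring
      _ = A L L * S.det := by rw [inv_mul_cancel₀ hdetS'.ne', mul_one]
  -- density
  set CS : ℝ := (2 * Real.pi) ^ (-((m:ℝ) + 1) / 2) * S.det ^ (-(1 : ℝ) / 2) with hCS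
  set CS' : ℝ := (2 * Real.pi) ^ (-(m:ℝ) / 2) * S'.det ^ (-(1 : ℝ) / 2) with hCS'
  set f : (Fin (m + 1) → ℝ) → ℝ :=
    fun u => CS * Real.exp (-(u ⬝ᵥ A *ᵥ u) / 2) with hf
  have hInt : Integrable f := (integrable_gaussExp hApd).const_mul CS
  have hfnn : ∀ u, 0 ≤ f u := fun u => by positivity
  -- sets
  set T : Set (Fin m → ℝ) := Set.pi Set.univ (fun i => Set.Iic (y i.castSucc)) with hT
  set W : ℝ → Set (Fin (m + 1) → ℝ) :=
    fun c => Set.pi Set.univ (fun i => Set.Iic (Function.update y L c i)) with hWdef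
  set U : Set (Fin (m + 1) → ℝ) := {u | ∀ i : Fin m, u i.castSucc ≤ y i.castSucc} with hU
  have hWmem : ∀ c u, u ∈ W c ↔ (∀ i : Fin m, u i.castSucc ≤ y i.castSucc) ∧ u L ≤ c := by
    intro c u
    rw [hWdef]
    simp only [Set.mem_univ_pi, Set.mem_Iic]
    constructor
    · intro h
      refine ⟨fun i => ?_, ?_⟩
      · have := h i.castSucc
        rwa [Function.update_of_ne (Fin.castSucc_lt_last i).ne] at this
      · have := h L
        rwa [Function.update_self] at this
    · rintro ⟨h1, h2⟩ i
      refine Fin.lastCases ?_ ?_ i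
      · rw [Function.update_self]; exact h2
      · intro j
        rw [Function.update_of_ne (Fin.castSucc_lt_last j).ne]
        exact h1 j
  have hWmeas : ∀ c, MeasurableSet (W c) :=
    fun c => MeasurableSet.univ_pi fun i => measurableSet_Iic
  have hUmeas : MeasurableSet U := by
    have : U = ⋂ i : Fin m, (fun u : Fin (m+1) → ℝ => u i.castSucc) ⁻¹' Set.Iic (y i.castSucc) := by
      ext u; simp [hU]
    rw [this]
    exact MeasurableSet.iInter fun i => (measurable_pi_apply _) measurableSet_Iic
  have hgauss_eq : ∀ c, gaussCDF S (Function.update y L c) = ∫ u in W c, f u := by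
    intro c
    rw [gaussCDF]
    push_cast
    rfl
  -- the marginalization identity
  have hUint : ∫ u in U, f u = gaussCDF S' (fun i => y i.castSucc) := by
    set φ := (MeasurableEquiv.piFinSuccAbove (fun _ : Fin (m + 1) => ℝ) L).trans
      (MeasurableEquiv.prodComm : ℝ × (Fin m → ℝ) ≃ᵐ (Fin m → ℝ) × ℝ) with hφdef
    have hswap : MeasurePreserving (⇑(MeasurableEquiv.prodComm : ℝ × (Fin m → ℝ) ≃ᵐ (Fin m → ℝ) × ℝ))
        (volume : Measure (ℝ × (Fin m → ℝ))) (volume : Measure ((Fin m → ℝ) × ℝ)) := by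
      rw [Measure.volume_eq_prod, Measure.volume_eq_prod]
      exact Measure.measurePreserving_swap
    have hφ : MeasurePreserving (⇑φ) volume volume :=
      hswap.comp (volume_preserving_piFinSuccAbove (fun _ : Fin (m + 1) => ℝ) L)
    set G : (Fin m → ℝ) × ℝ → ℝ := fun p => f (Fin.snoc p.1 p.2) with hG
    have hGφ : ∀ u, G (φ u) = f u := by
      intro u
      show f (Fin.snoc (L.removeNth u) (u L)) = f u
      congr 1
      have : L.removeNth u = Fin.init u := by
        funext j
        simp [Fin.removeNth, hL, Fin.succAbove_last, Fin.init]
      rw [this, hL, Fin.snoc_init_self]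
    have hGint : Integrable G := by
      have h1 : Integrable (G ∘ ⇑φ) := by
        have : G ∘ ⇑φ = f := funext hGφ
        rw [this]; exact hInt
      exact (hφ.integrable_comp_emb φ.measurableEmbedding).1 h1
    have hpre : ⇑φ ⁻¹' (T ×ˢ (Set.univ : Set ℝ)) = U := by
      ext u
      show φ u ∈ T ×ˢ (Set.univ : Set ℝ) ↔ u ∈ U
      rw [Set.mem_prod]
      simp only [Set.mem_univ, and_true]
      show (L.removeNth u) ∈ T ↔ _
      rw [hT, hU]
      simp only [Set.mem_univ_pi, Set.mem_Iic, Set.mem_setOf_eq]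
      constructor
      · intro h i
        have := h i
        simpa [Fin.removeNth, hL, Fin.succAbove_last] using this
      · intro h i
        simpa [Fin.removeNth, hL, Fin.succAbove_last] using h i
    have hkey : ∫ u in U, f u = ∫ p in T ×ˢ (Set.univ : Set ℝ), G p := by
      rw [← hpre]
      rw [← hφ.setIntegral_preimage_emb φ.measurableEmbedding G (T ×ˢ Set.univ)]
      refine setIntegral_congr_fun ?_ ?_
      · exact ((MeasurableSet.univ_pi fun i => measurableSet_Iic).prod
          MeasurableSet.univ).preimage φ.measurable
      · intro u _
        exact (hGφ u).symm
    have hprod : ∫ p in T ×ˢ (Set.univ : Set ℝ), G p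
        = ∫ v in T, ∫ t : ℝ, G (v, t) := by
      rw [Measure.volume_eq_prod]
      rw [setIntegral_prod G]
      · simp [Measure.restrict_univ]
      · rw [← Measure.volume_eq_prod]
        exact hGint.integrableOn
    have hinner : ∀ v : Fin m → ℝ, (∫ t : ℝ, G (v, t))
        = CS' * Real.exp (-(v ⬝ᵥ Bmat *ᵥ v) / 2) := by
      intro v
      have hrw : ∀ t : ℝ, G (v, t) = CS * Real.exp (-(A L L * t ^ 2
          + 2 * (∑ i, A L i.castSucc * v i) * t
          + v ⬝ᵥ (A.submatrix Fin.castSucc Fin.castSucc) *ᵥ v) / 2) := by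
        intro t
        show CS * Real.exp (-((Fin.snoc v t : Fin (m+1) → ℝ) ⬝ᵥ A *ᵥ _) / 2) = _
        rw [quad_snoc A hAsym v t]
      rw [integral_congr_ae (Filter.Eventually.of_forall hrw)]
      rw [MeasureTheory.integral_const_mul]
      rw [integral_exp_quadratic _ _ _ hαpos]
      rw [show v ⬝ᵥ (A.submatrix Fin.castSucc Fin.castSucc) *ᵥ v
            - (∑ i, A L i.castSucc * v i) ^ 2 / A L L = v ⬝ᵥ Bmat *ᵥ v from
        (quad_schur A hAsym hαpos.ne' v).symm]
      rw [← mul_assoc]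
      congr 1
      -- CS * sqrt (2π / α) = CS'
      have h2π : (0:ℝ) < 2 * Real.pi := by positivity
      rw [hCS, hCS', Real.sqrt_eq_rpow, Real.div_rpow h2π.le hαpos.le]
      rw [div_eq_mul_inv ((2*Real.pi) ^ (1/(2:ℝ))), ← Real.rpow_neg hαpos.le]
      have e1 : ((2*Real.pi)) ^ (-((m:ℝ) + 1) / 2) * (2*Real.pi) ^ (1/(2:ℝ))
          = (2*Real.pi) ^ (-(m:ℝ)/2) := by
        rw [← Real.rpow_add h2π]
        congr 1
        ring
      have e2 : S.det ^ (-(1:ℝ)/2) * (A L L) ^ (-(1/(2:ℝ)))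
          = S'.det ^ (-(1:ℝ)/2) := by
        rw [hdet', Real.mul_rpow hαpos.le hdetS.le]
        rw [show (-(1:ℝ)/2) = -(1/(2:ℝ)) by norm_num]
        ring
      calc (2*Real.pi) ^ (-((m:ℝ) + 1) / 2) * S.det ^ (-(1:ℝ)/2) *
            ((2*Real.pi) ^ (1/(2:ℝ)) * (A L L) ^ (-(1/(2:ℝ))))
          = ((2*Real.pi) ^ (-((m:ℝ) + 1) / 2) * (2*Real.pi) ^ (1/(2:ℝ))) *
            (S.det ^ (-(1:ℝ)/2) * (A L L) ^ (-(1/(2:ℝ)))) := by ring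
        _ = _ := by rw [e1, e2]
    have hfinal : gaussCDF S' (fun i => y i.castSucc) = ∫ v in T, CS' * Real.exp (-(v ⬝ᵥ Bmat *ᵥ v) / 2) := by
      rw [gaussCDF, hBinv]
    rw [hkey, hprod, hfinal]
    exact setIntegral_congr_fun (MeasurableSet.univ_pi fun i => measurableSet_Iic)
      (fun v _ => hinner v)
  -- limits
  have hmono : Monotone W := by
    intro c c' hcc u hu
    rw [hWmem] at hu ⊢
    exact ⟨hu.1, hu.2.trans hcc⟩
  have hUnion : (⋃ c : ℝ, W c) = U := by
    ext u
    simp only [Set.mem_iUnion]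
    constructor
    · rintro ⟨c, hc⟩
      exact ((hWmem c u).1 hc).1
    · intro h
      exact ⟨u L, (hWmem (u L) u).2 ⟨h, le_refl _⟩⟩
  constructor
  · have h1 : Tendsto (fun c : ℝ => ∫ u in W c, f u) atTop (nhds (∫ u in ⋃ c : ℝ, W c, f u)) :=
      tendsto_setIntegral_of_monotone hWmeas hmono (by rw [hUnion]; exact hInt.integrableOn)
    rw [hUnion, hUint] at h1
    refine h1.congr fun c => ?_
    exact (hgauss_eq c).symm
  · have hanti : Antitone (fun c : ℝ => W (-c)) := by
      intro c c' hcc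
      exact hmono (neg_le_neg hcc)
    have hInter : (⋂ c : ℝ, W (-c)) = ∅ := by
      ext u
      simp only [Set.mem_iInter, Set.mem_empty_iff_false, iff_false, not_forall]
      refine ⟨-(u L) + 1, fun hc => ?_⟩
      have := ((hWmem _ u).1 hc).2
      rw [neg_add, neg_neg] at this
      linarith
    have h2 : Tendsto (fun c : ℝ => ∫ u in W (-c), f u) atTop
        (nhds (∫ u in ⋂ c : ℝ, W (-c), f u)) :=
      tendsto_setIntegral_of_antitone (fun c => hWmeas _) hanti ⟨0, hInt.integrableOn⟩
    rw [hInter, setIntegral_empty] at h2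
    have h3 := h2.comp (tendsto_neg_atBot_atTop : Tendsto (fun c : ℝ => -c) atBot atTop)
    have h4 : Tendsto (fun c : ℝ => ∫ u in W c, f u) atBot (nhds 0) := by
      refine h3.congr fun c => ?_
      simp [Function.comp, neg_neg]
    refine h4.congr fun c => ?_
    exact (hgauss_eq c).symm

end Main

section Comb

lemma gaussCDF_fin_zero (R : Matrix (Fin 0) (Fin 0) ℝ) (x : Fin 0 → ℝ) : gaussCDF R x = 1 := by
  rw [gaussCDF]
  have h1 : Set.pi Set.univ (fun i : Fin 0 => Set.Iic (x i)) = Set.univ := by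
    ext u; simp
  have h2 : ∀ u : Fin 0 → ℝ,
      (2 * Real.pi) ^ (-(0 : ℕ) / 2 : ℝ) * R.det ^ (-(1 : ℝ) / 2) *
        Real.exp (-(dotProduct u (R⁻¹.mulVec u)) / 2) = 1 := by
    intro u
    have : dotProduct u (R⁻¹.mulVec u) = 0 := by
      simp [dotProduct]
    rw [this]
    simp [Matrix.det_fin_zero]
  rw [h1, Measure.restrict_univ]
  rw [integral_congr_ae (Filter.Eventually.of_forall h2)]
  simp [MeasureTheory.volume_pi, Measure.real, Measure.pi_of_empty]

/-- `blockFun` is always given by the subset sum. -/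
lemma blockFun_eq_sum (n q : ℕ) (R : Matrix (Fin n) (Fin n) ℝ) (x : Fin n → ℝ) :
    blockFun n q R x = ∑ s ∈ Finset.powersetCard q (Finset.univ : Finset (Fin n)),
      if h : s.card = q then
        gaussCDF (R.submatrix (s.orderEmbOfFin h) (s.orderEmbOfFin h))
          (fun i => x (s.orderEmbOfFin h i))
      else 0 := by
  rw [blockFun]
  by_cases hq : q = 0
  · subst hq
    rw [if_pos rfl, Finset.powersetCard_zero, Finset.sum_singleton,
      dif_pos Finset.card_empty, gaussCDF_fin_zero]
  · rw [if_neg hq]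

lemma orderEmb_map_castSucc {n q : ℕ} (t : Finset (Fin n)) (ht : t.card = q)
    (hc : (t.map Fin.castSuccEmb).card = q) :
    (fun i => ((t.orderEmbOfFin ht) i).castSucc)
      = ⇑((t.map Fin.castSuccEmb).orderEmbOfFin hc) := by
  apply Finset.orderEmbOfFin_unique
  · intro i
    rw [Finset.mem_map]
    exact ⟨t.orderEmbOfFin ht i, Finset.orderEmbOfFin_mem t ht i, rfl⟩
  · exact Fin.strictMono_castSucc.comp (t.orderEmbOfFin ht).strictMono

lemma snoc_strictMono {n q : ℕ} (g : Fin q → Fin n) (hg : StrictMono g) :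
    StrictMono (Fin.snoc (fun i => (g i).castSucc) (Fin.last n) : Fin (q + 1) → Fin (n + 1)) := by
  intro i j hij
  induction j using Fin.lastCases with
  | last =>
    induction i using Fin.lastCases with
    | last => exact absurd hij (lt_irrefl _)
    | cast i' =>
      rw [Fin.snoc_castSucc, Fin.snoc_last]
      exact Fin.castSucc_lt_last _
  | cast j' =>
    induction i using Fin.lastCases with
    | last => exact absurd hij (asymm (Fin.castSucc_lt_last j'))
    | cast i' =>
      rw [Fin.snoc_castSucc, Fin.snoc_castSucc]
      exact Fin.strictMono_castSucc (hg (by rwa [Fin.castSucc_lt_castSucc_iff] at hij))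

lemma orderEmb_insert_last {n q : ℕ} (t : Finset (Fin n)) (ht : t.card = q)
    (hc : (insert (Fin.last n) (t.map Fin.castSuccEmb)).card = q + 1) :
    (Fin.snoc (fun i => ((t.orderEmbOfFin ht) i).castSucc) (Fin.last n) : Fin (q + 1) → Fin (n + 1))
      = ⇑((insert (Fin.last n) (t.map Fin.castSuccEmb)).orderEmbOfFin hc) := by
  apply Finset.orderEmbOfFin_unique
  · intro i
    induction i using Fin.lastCases with
    | last =>
      rw [Fin.snoc_last]
      exact Finset.mem_insert_self _ _
    | cast i' =>
      rw [Fin.snoc_castSucc]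
      refine Finset.mem_insert_of_mem ?_
      rw [Finset.mem_map]
      exact ⟨t.orderEmbOfFin ht i', Finset.orderEmbOfFin_mem t ht i', rfl⟩
  · exact snoc_strictMono _ (t.orderEmbOfFin ht).strictMono

end Comb

section BlockLimit

variable {n : ℕ} (R : Matrix (Fin (n + 1)) (Fin (n + 1)) ℝ)

lemma blockLimit (hsym : R.IsSymm) (hpd : R.PosDef) (x : Fin (n + 1) → ℝ) (p : ℕ) :
    Tendsto (fun c => blockFun (n + 1) (p + 1) R (Function.update x (Fin.last n) c)) atTop
      (nhds (blockFun n (p + 1) (R.submatrix Fin.castSucc Fin.castSucc) (fun i => x i.castSucc)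
        + blockFun n p (R.submatrix Fin.castSucc Fin.castSucc) (fun i => x i.castSucc))) ∧
    Tendsto (fun c => blockFun (n + 1) (p + 1) R (Function.update x (Fin.last n) c)) atBot
      (nhds (blockFun n (p + 1) (R.submatrix Fin.castSucc Fin.castSucc)
        (fun i => x i.castSucc))) := by
  classical
  set R' := R.submatrix (Fin.castSucc : Fin n → Fin (n + 1)) Fin.castSucc with hR'
  set x' : Fin n → ℝ := fun i => x i.castSucc with hx'
  set M : Finset (Fin (n + 1)) := Finset.univ.map Fin.castSuccEmb with hM
  have hLM : Fin.last n ∉ M := by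
    rw [hM, Finset.mem_map]
    rintro ⟨a, -, ha⟩
    exact (Fin.castSucc_lt_last a).ne ha
  have huniv : (Finset.univ : Finset (Fin (n + 1))) = insert (Fin.last n) M := by
    rw [Fin.univ_castSuccEmb, Finset.cons_eq_insert]
  have hsplit : Finset.powersetCard (p + 1) (Finset.univ : Finset (Fin (n + 1)))
      = Finset.powersetCard (p + 1) M ∪
        Finset.image (insert (Fin.last n)) (Finset.powersetCard p M) := by
    rw [huniv]
    exact Finset.powersetCard_succ_insert hLM p
  have hdisj : Disjoint (Finset.powersetCard (p + 1) M)
      (Finset.image (insert (Fin.last n)) (Finset.powersetCard p M)) := by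
    rw [Finset.disjoint_left]
    intro s hs hs'
    have h1 : Fin.last n ∉ s := fun hin => hLM ((Finset.mem_powersetCard.1 hs).1 hin)
    obtain ⟨t, -, rfl⟩ := Finset.mem_image.1 hs'
    exact h1 (Finset.mem_insert_self _ _)
  -- F s c is the summand
  set F : Finset (Fin (n + 1)) → ℝ → ℝ := fun s c =>
    if h : s.card = p + 1 then
      gaussCDF (R.submatrix (s.orderEmbOfFin h) (s.orderEmbOfFin h))
        (fun i => Function.update x (Fin.last n) c (s.orderEmbOfFin h i))
    else 0 with hF
  have hblock : ∀ c, blockFun (n + 1) (p + 1) R (Function.update x (Fin.last n) c)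
      = (∑ s ∈ Finset.powersetCard (p + 1) M, F s c)
        + ∑ t ∈ Finset.powersetCard p (Finset.univ : Finset (Fin n)),
            F (insert (Fin.last n) (t.map Fin.castSuccEmb)) c := by
    intro c
    rw [blockFun_eq_sum, hsplit, Finset.sum_union hdisj]
    congr 1
    rw [Finset.sum_image ?hinj]
    case hinj =>
      intro t₁ h₁ t₂ h₂ hins
      have e₁ : Fin.last n ∉ t₁ := fun hin => hLM ((Finset.mem_powersetCard.1 h₁).1 hin)
      have e₂ : Fin.last n ∉ t₂ := fun hin => hLM ((Finset.mem_powersetCard.1 h₂).1 hin)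
      have := congrArg (fun u : Finset (Fin (n + 1)) => u.erase (Fin.last n)) hins
      simpa [Finset.erase_insert e₁, Finset.erase_insert e₂] using this
    rw [hM, Finset.powersetCard_map, Finset.sum_map]
    refine Finset.sum_congr rfl fun t _ => ?_
    rfl
  -- Part A: the first sum is constant in c
  have hpartA : ∀ c, (∑ s ∈ Finset.powersetCard (p + 1) M, F s c)
      = blockFun n (p + 1) R' x' := by
    intro c
    rw [hM, Finset.powersetCard_map, Finset.sum_map, blockFun_eq_sum]
    refine Finset.sum_congr rfl fun t htmem => ?_
    have ht : t.card = p + 1 := (Finset.mem_powersetCard.1 htmem).2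
    have hc : (t.map Fin.castSuccEmb).card = p + 1 := by rw [Finset.card_map]; exact ht
    show F (t.map Fin.castSuccEmb) c = _
    simp only [hF]
    rw [dif_pos hc, dif_pos ht]
    have hfun : ∀ i, (t.map Fin.castSuccEmb).orderEmbOfFin hc i
        = ((t.orderEmbOfFin ht) i).castSucc := fun i =>
      (congrFun (orderEmb_map_castSucc t ht hc) i).symm
    congr 1
    · ext i j
      rw [Matrix.submatrix_apply, Matrix.submatrix_apply, hfun i, hfun j]
      rw [hR', Matrix.submatrix_apply]
    · funext i
      rw [hfun i, Function.update_of_ne (Fin.castSucc_lt_last _).ne]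
  -- Part B: per-term limits
  have hpartB : ∀ (t : Finset (Fin n)), t ∈ Finset.powersetCard p (Finset.univ : Finset (Fin n)) →
      Tendsto (fun c => F (insert (Fin.last n) (t.map Fin.castSuccEmb)) c) atTop
        (nhds (if h : t.card = p then
          gaussCDF (R'.submatrix (t.orderEmbOfFin h) (t.orderEmbOfFin h))
            (fun i => x' (t.orderEmbOfFin h i)) else 0)) ∧
      Tendsto (fun c => F (insert (Fin.last n) (t.map Fin.castSuccEmb)) c) atBot (nhds 0) := by
    intro t htmem
    have ht : t.card = p := (Finset.mem_powersetCard.1 htmem).2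
    have hnm : Fin.last n ∉ t.map Fin.castSuccEmb := by
      rw [Finset.mem_map]
      rintro ⟨a, -, ha⟩
      exact (Fin.castSucc_lt_last a).ne ha
    have hc : (insert (Fin.last n) (t.map Fin.castSuccEmb)).card = p + 1 := by
      rw [Finset.card_insert_of_notMem hnm, Finset.card_map, ht]
    set E : Fin (p + 1) → Fin (n + 1) :=
      (Fin.snoc (fun i => ((t.orderEmbOfFin ht) i).castSucc) (Fin.last n)) with hE
    have hEeq : E = ⇑((insert (Fin.last n) (t.map Fin.castSuccEmb)).orderEmbOfFin hc) :=
      orderEmb_insert_last t ht hc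
    have hEsm : StrictMono E := snoc_strictMono _ (t.orderEmbOfFin ht).strictMono
    have hElast : E (Fin.last p) = Fin.last n := by rw [hE]; exact Fin.snoc_last _ _
    have hEcast : ∀ j : Fin p, E j.castSucc = ((t.orderEmbOfFin ht) j).castSucc := by
      intro j; rw [hE]; exact Fin.snoc_castSucc _ _ _
    have hFeq : ∀ c, F (insert (Fin.last n) (t.map Fin.castSuccEmb)) c
        = gaussCDF (R.submatrix E E)
            (Function.update (fun i => x (E i)) (Fin.last p) c) := by
      intro c
      simp only [hF]
      rw [dif_pos hc]
      rw [← hEeq]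
      congr 1
      funext i
      induction i using Fin.lastCases with
      | last => rw [hElast, Function.update_self, Function.update_self]
      | cast j =>
        rw [Function.update_of_ne (Fin.castSucc_lt_last j).ne, hEcast j,
          Function.update_of_ne (Fin.castSucc_lt_last _).ne]
    have hglim := gauss_limits p (R.submatrix E E) (hsym.submatrix E)
      (posDef_submatrix_of_injective hpd E hEsm.injective) (fun i => x (E i))
    have htarget : gaussCDF ((R.submatrix E E).submatrix Fin.castSucc Fin.castSucc)
        (fun i => x (E i.castSucc))
        = gaussCDF (R'.submatrix (t.orderEmbOfFin ht) (t.orderEmbOfFin ht))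
            (fun i => x' (t.orderEmbOfFin ht i)) := by
      congr 1
      · ext i j
        simp only [Matrix.submatrix_apply]
        rw [hEcast i, hEcast j, hR']
        simp [Matrix.submatrix_apply]
      · funext i
        rw [hEcast i, hx']
    constructor
    · rw [dif_pos ht]
      have h1 := hglim.1
      rw [htarget] at h1
      refine h1.congr fun c => (hFeq c).symm
    · exact hglim.2.congr fun c => (hFeq c).symm
  constructor
  · have hsum : Tendsto (fun c => ∑ t ∈ Finset.powersetCard p
        (Finset.univ : Finset (Fin n)), F (insert (Fin.last n) (t.map Fin.castSuccEmb)) c) atTop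
        (nhds (∑ t ∈ Finset.powersetCard p (Finset.univ : Finset (Fin n)),
          if h : t.card = p then
            gaussCDF (R'.submatrix (t.orderEmbOfFin h) (t.orderEmbOfFin h))
              (fun i => x' (t.orderEmbOfFin h i)) else 0)) :=
      tendsto_finset_sum _ (fun t htmem => (hpartB t htmem).1)
    rw [← blockFun_eq_sum] at hsum
    have := (tendsto_const_nhds (x := blockFun n (p+1) R' x') (f := atTop (α := ℝ))).add hsum
    refine this.congr fun c => ?_
    rw [← hpartA c, ← hblock c]
  · have hsum : Tendsto (fun c => ∑ t ∈ Finset.powersetCard p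
        (Finset.univ : Finset (Fin n)), F (insert (Fin.last n) (t.map Fin.castSuccEmb)) c) atBot
        (nhds (∑ t ∈ Finset.powersetCard p (Finset.univ : Finset (Fin n)), 0)) :=
      tendsto_finset_sum _ (fun t htmem => (hpartB t htmem).2)
    rw [Finset.sum_const, smul_zero] at hsum
    have := (tendsto_const_nhds (x := blockFun n (p+1) R' x') (f := atBot (α := ℝ))).add hsum
    rw [add_zero] at this
    refine this.congr fun c => ?_
    rw [← hpartA c, ← hblock c]

end BlockLimit

theorem cluster_function_clustering (n : ℕ)
    (R : Matrix (Fin (n + 1)) (Fin (n + 1)) ℝ) (hsym : R.IsSymm) (hpd : R.PosDef)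
    (hdiag : ∀ i, R i i = 1) (x : Fin (n + 1) → ℝ) :
    Tendsto (fun c => clusterFun (n + 1) R (Function.update x (Fin.last n) c)) atTop
      (nhds (clusterFun n (R.submatrix Fin.castSucc Fin.castSucc) (fun i => x i.castSucc))) ∧
    Tendsto (fun c => clusterFun (n + 1) R (Function.update x (Fin.last n) c)) atBot
      (nhds (-clusterFun n (R.submatrix Fin.castSucc Fin.castSucc) (fun i => x i.castSucc))) := by
  classical
  set R' := R.submatrix (Fin.castSucc : Fin n → Fin (n + 1)) Fin.castSucc with hR'
  set x' : Fin n → ℝ := fun i => x i.castSucc with hx'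
  set B : ℕ → ℝ := fun q => blockFun n q R' x' with hB
  -- decompose clusterFun (n+1)
  have hclu : ∀ z : Fin (n + 1) → ℝ, clusterFun (n + 1) R z
      = (∑ p ∈ Finset.range (n + 1),
          (-1 : ℝ) ^ p * 2 ^ (n + 1 - p) * blockFun (n + 1) (n + 1 - p) R z)
        + (-1 : ℝ) ^ (n + 1) := by
    intro z
    rw [clusterFun, Finset.sum_range_succ]
    congr 1
    rw [Nat.sub_self, blockFun]
    norm_num
  have hstep : ∀ p ∈ Finset.range (n + 1), n + 1 - p = (n - p) + 1 := by
    intro p hp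
    rw [Finset.mem_range] at hp
    omega
  -- B (n+1) = 0
  have hBtop : blockFun n (n + 1) R' x' = 0 := by
    rw [blockFun_eq_sum]
    rw [Finset.powersetCard_eq_empty.2 (by simp)]
    exact Finset.sum_empty
  have hB0 : blockFun n 0 R' x' = 1 := by rw [blockFun]; simp
  -- the shifted sum identity
  have hS1 : (∑ p ∈ Finset.range (n + 1),
      (-1 : ℝ) ^ p * 2 ^ (n + 1 - p) * B (n + 1 - p))
      = -(clusterFun n R' x') + (-1 : ℝ) ^ n := by
    rw [Finset.sum_range_succ']
    have h0 : (-1 : ℝ) ^ 0 * 2 ^ (n + 1 - 0) * B (n + 1 - 0) = 0 := by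
      simp only [Nat.sub_zero, hB, hBtop]
      ring
    rw [h0, add_zero]
    have hsh : ∀ p, p < n → (-1 : ℝ) ^ (p + 1) * 2 ^ (n + 1 - (p + 1)) * B (n + 1 - (p + 1))
        = -((-1 : ℝ) ^ p * 2 ^ (n - p) * B (n - p)) := by
      intro p hp
      have : n + 1 - (p + 1) = n - p := by omega
      rw [this, pow_succ]
      ring
    rw [Finset.sum_congr rfl fun p hp => hsh p (Finset.mem_range.1 hp)]
    rw [Finset.sum_neg_distrib]
    have hG : clusterFun n R' x' = (∑ p ∈ Finset.range n,
        (-1 : ℝ) ^ p * 2 ^ (n - p) * B (n - p)) + (-1 : ℝ) ^ n := by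
      rw [clusterFun, Finset.sum_range_succ]
      congr 1
      rw [Nat.sub_self, hB0]
      ring
    rw [hG]
    ring
  constructor
  · -- atTop
    have hterms : Tendsto (fun c => ∑ p ∈ Finset.range (n + 1),
        (-1 : ℝ) ^ p * 2 ^ (n + 1 - p) * blockFun (n + 1) (n + 1 - p) R
          (Function.update x (Fin.last n) c)) atTop
        (nhds (∑ p ∈ Finset.range (n + 1),
          (-1 : ℝ) ^ p * 2 ^ (n + 1 - p) * (B (n + 1 - p) + B (n - p)))) := by
      refine tendsto_finset_sum _ fun p hp => ?_
      have h1 := (blockLimit R hsym hpd x (n - p)).1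
      rw [← hstep p hp] at h1
      exact (h1.const_mul _).congr fun c => rfl
    have htot := hterms.add (tendsto_const_nhds (x := (-1 : ℝ) ^ (n + 1)))
    have hval : (∑ p ∈ Finset.range (n + 1),
        (-1 : ℝ) ^ p * 2 ^ (n + 1 - p) * (B (n + 1 - p) + B (n - p)))
        + (-1 : ℝ) ^ (n + 1) = clusterFun n R' x' := by
      have hsplit2 : (∑ p ∈ Finset.range (n + 1),
          (-1 : ℝ) ^ p * 2 ^ (n + 1 - p) * (B (n + 1 - p) + B (n - p)))
          = (∑ p ∈ Finset.range (n + 1), (-1 : ℝ) ^ p * 2 ^ (n + 1 - p) * B (n + 1 - p))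
            + ∑ p ∈ Finset.range (n + 1), (-1 : ℝ) ^ p * 2 ^ (n + 1 - p) * B (n - p) := by
        rw [← Finset.sum_add_distrib]
        refine Finset.sum_congr rfl fun p _ => ?_
        ring
      have hdouble : (∑ p ∈ Finset.range (n + 1), (-1 : ℝ) ^ p * 2 ^ (n + 1 - p) * B (n - p))
          = 2 * clusterFun n R' x' := by
        rw [clusterFun, Finset.mul_sum]
        refine Finset.sum_congr rfl fun p hp => ?_
        rw [hstep p hp, pow_succ]
        ring
      rw [hsplit2, hS1, hdouble, pow_succ]
      ring
    rw [hval] at htot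
    refine htot.congr fun c => ?_
    exact (hclu _).symm
  · -- atBot
    have hterms : Tendsto (fun c => ∑ p ∈ Finset.range (n + 1),
        (-1 : ℝ) ^ p * 2 ^ (n + 1 - p) * blockFun (n + 1) (n + 1 - p) R
          (Function.update x (Fin.last n) c)) atBot
        (nhds (∑ p ∈ Finset.range (n + 1),
          (-1 : ℝ) ^ p * 2 ^ (n + 1 - p) * B (n + 1 - p))) := by
      refine tendsto_finset_sum _ fun p hp => ?_
      have h1 := (blockLimit R hsym hpd x (n - p)).2
      rw [← hstep p hp] at h1
      exact (h1.const_mul _).congr fun c => rfl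
    have htot := hterms.add (tendsto_const_nhds (x := (-1 : ℝ) ^ (n + 1)))
    have hval : (∑ p ∈ Finset.range (n + 1),
        (-1 : ℝ) ^ p * 2 ^ (n + 1 - p) * B (n + 1 - p)) + (-1 : ℝ) ^ (n + 1)
        = -clusterFun n R' x' := by
      rw [hS1, pow_succ]
      ring
    rw [hval] at htot
    refine htot.congr fun c => ?_
    exact (hclu _).symm
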